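/- Let A be a subset of the unit sphere of ℝⁿ with the origin in the interior of the convex hull of A. Then the intersection over x ∈ A of the crescents C(x) = {y : ‖y‖ ≤ 1 and dist(x,y) ≥ √2} is empty. -/

import Mathlib

theorem inter_crescents_empty (n : ℕ) (A : Set (EuclideanSpace ℝ (Fin n)))
    (hA : ∀ x ∈ A, ‖x‖ = 1)
    (h0 : (0 : EuclideanSpace ℝ (Fin n)) ∈ interior (convexHull ℝ A)) :
    (⋂ x ∈ A, {y : EuclideanSpace ℝ (Fin n) | ‖y‖ ≤ 1 ∧ Real.sqrt 2 ≤ dist x y}) = ∅ := by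
  by_contra h
  obtain ⟨y, hy⟩ := Set.nonempty_iff_ne_empty.2 h
  simp only [Set.mem_iInter, Set.mem_setOf_eq] at hy
  -- A is nonempty
  have hAne : A.Nonempty := by
    by_contra hAe
    rw [Set.not_nonempty_iff_eq_empty] at hAe
    simp [hAe] at h0
  obtain ⟨x0, hx0⟩ := hAne
  have hy1 : ‖y‖ ≤ 1 := (hy x0 hx0).1
  -- key inner product bound
  have key : ∀ x ∈ A, (inner ℝ y x : ℝ) ≤ (‖y‖ ^ 2 - 1) / 2 := by
    intro x hx
    obtain ⟨-, hd⟩ := hy x hx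
    have h2 : (2 : ℝ) ≤ dist x y ^ 2 := by
      have := sq_le_sq' (by linarith [Real.sqrt_nonneg 2, dist_nonneg (x := x) (y := y)]) hd
      simpa [Real.sq_sqrt (by norm_num : (2:ℝ) ≥ 0)] using this
    have hxy : dist x y ^ 2 = ‖x‖ ^ 2 - 2 * (inner ℝ x y : ℝ) + ‖y‖ ^ 2 := by
      rw [dist_eq_norm, @norm_sub_sq_real]
    rw [hxy, hA x hx] at h2
    rw [real_inner_comm]
    nlinarith
  -- convex hull is in the halfspace
  have hconv : convexHull ℝ A ⊆ {z | (inner ℝ y z : ℝ) ≤ (‖y‖ ^ 2 - 1) / 2} := by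
    apply convexHull_min key
    exact convex_halfSpace_le (by exact (innerSL ℝ y).toLinearMap.isLinear) _
  -- ball around 0 in convex hull
  obtain ⟨ε, hε, hball⟩ := Metric.mem_nhds_iff.1 (mem_interior_iff_mem_nhds.1 h0)
  by_cases hy0 : y = 0
  · have := (hy x0 hx0).2
    rw [hy0, dist_zero_right, hA x0 hx0] at this
    nlinarith [Real.sq_sqrt (by norm_num : (2:ℝ) ≥ 0), Real.sqrt_nonneg 2]
  · have hyn : 0 < ‖y‖ := norm_pos_iff.2 hy0
    set z := (ε / (2 * ‖y‖)) • y with hz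
    have hzmem : z ∈ Metric.ball (0 : EuclideanSpace ℝ (Fin n)) ε := by
      rw [Metric.mem_ball, dist_zero_right, hz, norm_smul]
      rw [Real.norm_eq_abs, abs_of_pos (by positivity)]
      rw [div_mul_eq_mul_div, div_lt_iff₀ (by positivity)]
      nlinarith
    have := hconv (hball hzmem)
    simp only [Set.mem_setOf_eq, hz, real_inner_smul_right, real_inner_self_eq_norm_sq] at this
    have hp : 0 < ε / (2 * ‖y‖) * ‖y‖ ^ 2 := by positivity
    nlinarith
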